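/- The approximants d_n of the DT bisimulation metric satisfy the quadrilateral inequality: for all states s_i, s_j, s_k, s_l in S and all n ∈ ℕ, d_n(s_i, s_l) ≤ d_n(s_i, s_j) + d_n(s_k, s_j) + d_n(s_k, s_l), where the first argument of d_n refers to a state of the real MDP and the second argument to a state of the DT MDP. -/
import Mathlib


open Finset Filter

variable {S A : Type*}

/-- A coupling of two distributions on a finite set: nonnegative matrix with
row marginals `P` and column marginals `Q`. -/
def IsCoupling [Fintype S] (P Q : S → ℝ) (lam : S → S → ℝ) : Prop :=
  (∀ i j, 0 ≤ lam i j) ∧ (∀ i, ∑ j, lam i j = P i) ∧ (∀ j, ∑ i, lam i j = Q j)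

/-- The 1-Wasserstein distance on a finite set with cost function `d`:
the minimal transport cost over all couplings of `P` and `Q`. -/
noncomputable def W1 [Fintype S] (P Q : S → ℝ) (d : S → S → ℝ) : ℝ :=
  sInf {c : ℝ | ∃ lam, IsCoupling P Q lam ∧ c = ∑ i, ∑ j, lam i j * d i j}

/-- `P` is a probability distribution on the finite set `S`. -/
def IsProbDist [Fintype S] (P : S → ℝ) : Prop := (∀ i, 0 ≤ P i) ∧ ∑ i, P i = 1

/-- Total variation distance between two distributions on a finite set. -/
noncomputable def TVdist [Fintype S] (P Q : S → ℝ) : ℝ := (1/2) * ∑ i, |P i - Q i|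

/-- The Bellman optimality operator of a finite MDP. -/
noncomputable def bellman [Fintype S] [Fintype A] [Nonempty A]
    (P : S → A → S → ℝ) (R : S → A → ℝ) (γ : ℝ) (V : S → ℝ) : S → ℝ :=
  fun s => ⨆ a : A, (R s a + γ * ∑ t, P s a t * V t)

/-- The DT-BSM operator `F` between two MDPs sharing state and action spaces. -/
noncomputable def Fop [Fintype S] [Fintype A] [Nonempty A]
    (P P' : S → A → S → ℝ) (R R' : S → A → ℝ) (γ : ℝ) (d : S → S → ℝ) : S → S → ℝ :=
  fun i j => ⨆ a : A, (|R i a - R' j a| + γ * W1 (P i a) (P' j a) d)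

/-! ### Auxiliary lemmas -/

private lemma aux_div (a b : ℝ) (h : b = 0 → a = 0) : a / b * b = a := by
  by_cases hb : b = 0
  · simp [hb, h hb]
  · field_simp

private lemma master3 [Fintype S] (a : S → ℝ) (b c : S → S → ℝ) :
    ∑ w, ∑ y, ∑ z, a y * (b y z * c z w)
      = ∑ y, a y * ∑ z, b y z * ∑ w, c z w := by
  rw [Finset.sum_comm]
  refine Finset.sum_congr rfl fun y _ => ?_
  rw [Finset.sum_comm]
  simp [Finset.mul_sum]

private lemma master3' [Fintype S] (a b : S → S → ℝ) (g : S → ℝ) :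
    ∑ x, ∑ y, ∑ z, a x y * (b y z * g z)
      = ∑ y, (∑ x, a x y) * ∑ z, b y z * g z := by
  rw [Finset.sum_comm]
  refine Finset.sum_congr rfl fun y _ => ?_
  simp only [Finset.sum_mul, Finset.mul_sum]
  exact Finset.sum_comm

private lemma master4 [Fintype S] (a b c : S → S → ℝ) :
    ∑ x, ∑ w, ∑ y, ∑ z, a x y * (b y z * c z w)
      = ∑ y, (∑ x, a x y) * ∑ z, b y z * ∑ w, c z w := by
  have h : ∀ x, ∑ w, ∑ y, ∑ z, a x y * (b y z * c z w)
      = ∑ y, a x y * ∑ z, b y z * ∑ w, c z w := fun x => master3 (a x) b c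
  simp only [h]
  rw [Finset.sum_comm]
  exact Finset.sum_congr rfl fun y _ => (Finset.sum_mul _ _ _).symm

private lemma cost_nonneg [Fintype S] (lam d : S → S → ℝ)
    (hl : ∀ i j, 0 ≤ lam i j) (hd : ∀ i j, 0 ≤ d i j) :
    0 ≤ ∑ i, ∑ j, lam i j * d i j :=
  Finset.sum_nonneg fun i _ => Finset.sum_nonneg fun j _ => mul_nonneg (hl i j) (hd i j)

private lemma W1_bddBelow [Fintype S] (P Q : S → ℝ) (d : S → S → ℝ) (hd : ∀ i j, 0 ≤ d i j) :
    BddBelow {c : ℝ | ∃ lam, IsCoupling P Q lam ∧ c = ∑ i, ∑ j, lam i j * d i j} := by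
  refine ⟨0, fun c hc => ?_⟩
  obtain ⟨lam, hlam, rfl⟩ := hc
  exact cost_nonneg lam d hlam.1 hd

private lemma W1_le [Fintype S] (P Q : S → ℝ) (d lam : S → S → ℝ)
    (hd : ∀ i j, 0 ≤ d i j) (h : IsCoupling P Q lam) :
    W1 P Q d ≤ ∑ i, ∑ j, lam i j * d i j :=
  csInf_le (W1_bddBelow P Q d hd) ⟨lam, h, rfl⟩

private lemma W1_set_nonempty [Fintype S] (P Q : S → ℝ)
    (hP : IsProbDist P) (hQ : IsProbDist Q) (d : S → S → ℝ) :
    {c : ℝ | ∃ lam, IsCoupling P Q lam ∧ c = ∑ i, ∑ j, lam i j * d i j}.Nonempty := by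
  refine ⟨_, fun i j => P i * Q j, ⟨fun i j => mul_nonneg (hP.1 i) (hQ.1 j), ?_, ?_⟩, rfl⟩
  · intro i; rw [← Finset.mul_sum, hQ.2, mul_one]
  · intro j; rw [← Finset.sum_mul, hP.2, one_mul]

private lemma W1_nonneg [Fintype S] (P Q : S → ℝ) (d : S → S → ℝ)
    (hP : IsProbDist P) (hQ : IsProbDist Q) (hd : ∀ i j, 0 ≤ d i j) :
    0 ≤ W1 P Q d := by
  refine le_csInf (W1_set_nonempty P Q hP hQ d) fun c hc => ?_
  obtain ⟨lam, hlam, rfl⟩ := hc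
  exact cost_nonneg lam d hlam.1 hd

/-- Gluing: from couplings (Pi,Q), (Pm,Q), (Pm,Ql) build a coupling of (Pi,Ql)
whose cost is bounded by the sum of the three costs, using the quadrilateral
property of the cost `d`. -/
private lemma glue [Fintype S] (Pi Pm Q Ql : S → ℝ) (lam1 lam2 lam3 d : S → S → ℝ)
    (h1 : IsCoupling Pi Q lam1) (h2 : IsCoupling Pm Q lam2) (h3 : IsCoupling Pm Ql lam3)
    (hd : ∀ i j, 0 ≤ d i j)
    (hquad : ∀ x y z w, d x w ≤ d x y + d z y + d z w) :
    W1 Pi Ql d ≤ (∑ x, ∑ y, lam1 x y * d x y) + (∑ z, ∑ y, lam2 z y * d z y)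
      + (∑ z, ∑ w, lam3 z w * d z w) := by
  obtain ⟨hl1, hr1, hc1⟩ := h1
  obtain ⟨hl2, hr2, hc2⟩ := h2
  obtain ⟨hl3, hr3, hc3⟩ := h3
  have Qnn : ∀ y, 0 ≤ Q y := fun y => hc1 y ▸ Finset.sum_nonneg fun i _ => hl1 i y
  have Pmnn : ∀ z, 0 ≤ Pm z := fun z => hr2 z ▸ Finset.sum_nonneg fun j _ => hl2 z j
  have k1 : ∀ y, Q y = 0 → ∀ x, lam1 x y = 0 := fun y hy x =>
    (Finset.sum_eq_zero_iff_of_nonneg (fun i _ => hl1 i y)).1 ((hc1 y).trans hy) x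
      (Finset.mem_univ x)
  have k2Q : ∀ y, Q y = 0 → ∀ z, lam2 z y = 0 := fun y hy z =>
    (Finset.sum_eq_zero_iff_of_nonneg (fun i _ => hl2 i y)).1 ((hc2 y).trans hy) z
      (Finset.mem_univ z)
  have k2P : ∀ z, Pm z = 0 → ∀ y, lam2 z y = 0 := fun z hz y =>
    (Finset.sum_eq_zero_iff_of_nonneg (fun j _ => hl2 z j)).1 ((hr2 z).trans hz) y
      (Finset.mem_univ y)
  have k3 : ∀ z, Pm z = 0 → ∀ w, lam3 z w = 0 := fun z hz w =>
    (Finset.sum_eq_zero_iff_of_nonneg (fun j _ => hl3 z j)).1 ((hr3 z).trans hz) w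
      (Finset.mem_univ w)
  set μ : S → S → S → S → ℝ :=
    fun x y z w => (lam1 x y / Q y) * (lam2 z y * (lam3 z w / Pm z)) with hμ
  set ν : S → S → ℝ := fun x w => ∑ y, ∑ z, μ x y z w with hν
  have μnn : ∀ x y z w, 0 ≤ μ x y z w := fun x y z w =>
    mul_nonneg (div_nonneg (hl1 x y) (Qnn y))
      (mul_nonneg (hl2 z y) (div_nonneg (hl3 z w) (Pmnn z)))
  -- collapse lemmas
  have sumc : ∀ z, ∑ w, lam3 z w / Pm z = Pm z / Pm z := by
    intro z; rw [← Finset.sum_div, hr3]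
  have bcollapse : ∀ y z, lam2 z y * (Pm z / Pm z) = lam2 z y := by
    intro y z
    by_cases hz : Pm z = 0
    · simp [hz, k2P z hz y]
    · rw [div_self hz, mul_one]
  have νcoup : IsCoupling Pi Ql ν := by
    refine ⟨fun x w => Finset.sum_nonneg fun y _ => Finset.sum_nonneg fun z _ => μnn x y z w,
      ?_, ?_⟩
    · intro x
      have := master3 (fun y => lam1 x y / Q y) (fun y z => lam2 z y)
        (fun z w => lam3 z w / Pm z)
      calc ∑ w, ν x w = ∑ y, (lam1 x y / Q y) * ∑ z, lam2 z y * ∑ w, lam3 z w / Pm z := this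
        _ = ∑ y, lam1 x y := by
              refine Finset.sum_congr rfl fun y _ => ?_
              rw [show (∑ z, lam2 z y * ∑ w, lam3 z w / Pm z) = Q y by
                    rw [← hc2 y]; exact Finset.sum_congr rfl fun z _ => by
                      rw [sumc z]; exact bcollapse y z]
              exact aux_div _ _ fun hy => k1 y hy x
        _ = Pi x := hr1 x
    · intro w
      have := master3' (fun x y => lam1 x y / Q y) (fun y z => lam2 z y)
        (fun z => lam3 z w / Pm z)
      calc ∑ x, ν x w
          = ∑ y, (∑ x, lam1 x y / Q y) * ∑ z, lam2 z y * (lam3 z w / Pm z) := this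
        _ = ∑ y, ∑ z, lam2 z y * (lam3 z w / Pm z) := by
              refine Finset.sum_congr rfl fun y _ => ?_
              rw [← Finset.sum_div, hc1]
              by_cases hy : Q y = 0
              · simp [hy, fun z => k2Q y hy z]
              · rw [div_self hy, one_mul]
        _ = ∑ z, (∑ y, lam2 z y) * (lam3 z w / Pm z) := by
              rw [Finset.sum_comm]
              exact Finset.sum_congr rfl fun z _ => (Finset.sum_mul _ _ _).symm
        _ = ∑ z, lam3 z w := by
              refine Finset.sum_congr rfl fun z _ => ?_
              rw [hr2]
              by_cases hz : Pm z = 0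
              · simp [hz, k3 z hz w]
              · rw [mul_comm]; exact aux_div _ _ fun h => absurd h hz
        _ = Ql w := hc3 w
  refine le_trans (W1_le Pi Ql d ν hd νcoup) ?_
  -- cost bound
  have expand : ∑ x, ∑ w, ν x w * d x w
      = ∑ x, ∑ w, ∑ y, ∑ z, μ x y z w * d x w := by
    refine Finset.sum_congr rfl fun x _ => Finset.sum_congr rfl fun w _ => ?_
    rw [hν]; simp [Finset.sum_mul]
  rw [expand]
  have step : ∑ x, ∑ w, ∑ y, ∑ z, μ x y z w * d x w
      ≤ ∑ x, ∑ w, ∑ y, ∑ z, μ x y z w * (d x y + d z y + d z w) := by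
    refine Finset.sum_le_sum fun x _ => Finset.sum_le_sum fun w _ =>
      Finset.sum_le_sum fun y _ => Finset.sum_le_sum fun z _ => ?_
    exact mul_le_mul_of_nonneg_left (hquad x y z w) (μnn x y z w)
  refine le_trans step ?_
  have split : ∑ x, ∑ w, ∑ y, ∑ z, μ x y z w * (d x y + d z y + d z w)
      = (∑ x, ∑ w, ∑ y, ∑ z, μ x y z w * d x y)
        + (∑ x, ∑ w, ∑ y, ∑ z, μ x y z w * d z y)
        + (∑ x, ∑ w, ∑ y, ∑ z, μ x y z w * d z w) := by
    simp [mul_add, Finset.sum_add_distrib]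
  rw [split]
  have e1 : (∑ x, ∑ w, ∑ y, ∑ z, μ x y z w * d x y) = ∑ x, ∑ y, lam1 x y * d x y := by
    have rearr : ∀ x y z w, μ x y z w * d x y
        = (lam1 x y * d x y / Q y) * (lam2 z y * (lam3 z w / Pm z)) := by
      intro x y z w; rw [hμ]; ring
    simp only [rearr]
    rw [master4]
    rw [Finset.sum_comm]
    refine Finset.sum_congr rfl fun y _ => ?_
    rw [show (∑ z, lam2 z y * ∑ w, lam3 z w / Pm z) = Q y by
          rw [← hc2 y]; exact Finset.sum_congr rfl fun z _ => by
            rw [sumc z]; exact bcollapse y z]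
    rw [Finset.sum_mul]
    exact Finset.sum_congr rfl fun x _ => aux_div _ _ fun hy => by rw [k1 y hy x, zero_mul]
  have e2 : (∑ x, ∑ w, ∑ y, ∑ z, μ x y z w * d z y) = ∑ z, ∑ y, lam2 z y * d z y := by
    have rearr : ∀ x y z w, μ x y z w * d z y
        = (lam1 x y / Q y) * ((lam2 z y * d z y) * (lam3 z w / Pm z)) := by
      intro x y z w; rw [hμ]; ring
    simp only [rearr]
    rw [master4, Finset.sum_comm]
    refine Finset.sum_congr rfl fun y _ => ?_
    rw [← Finset.sum_div, hc1]
    have inner : (∑ z, lam2 z y * d z y * ∑ w, lam3 z w / Pm z) = ∑ z, lam2 z y * d z y := by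
      refine Finset.sum_congr rfl fun z _ => ?_
      rw [sumc z]
      by_cases hz : Pm z = 0
      · simp [hz, k2P z hz y]
      · rw [div_self hz, mul_one]
    rw [inner]
    by_cases hy : Q y = 0
    · simp [hy, fun z => k2Q y hy z]
    · rw [div_self hy, one_mul]
  have e3 : (∑ x, ∑ w, ∑ y, ∑ z, μ x y z w * d z w) = ∑ z, ∑ w, lam3 z w * d z w := by
    have rearr : ∀ x y z w, μ x y z w * d z w
        = (lam1 x y / Q y) * (lam2 z y * (lam3 z w * d z w / Pm z)) := by
      intro x y z w; rw [hμ]; ring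
    simp only [rearr]
    rw [master4]
    calc ∑ y, (∑ x, lam1 x y / Q y) * ∑ z, lam2 z y * ∑ w, lam3 z w * d z w / Pm z
        = ∑ y, ∑ z, lam2 z y * ((∑ w, lam3 z w * d z w) / Pm z) := by
          refine Finset.sum_congr rfl fun y _ => ?_
          rw [← Finset.sum_div, hc1]
          have : (∑ z, lam2 z y * ∑ w, lam3 z w * d z w / Pm z)
              = ∑ z, lam2 z y * ((∑ w, lam3 z w * d z w) / Pm z) := by
            refine Finset.sum_congr rfl fun z _ => ?_
            rw [← Finset.sum_div]
          rw [this]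
          by_cases hy : Q y = 0
          · simp [hy, fun z => k2Q y hy z]
          · rw [div_self hy, one_mul]
      _ = ∑ z, (∑ y, lam2 z y) * ((∑ w, lam3 z w * d z w) / Pm z) := by
          rw [Finset.sum_comm]
          exact Finset.sum_congr rfl fun z _ => (Finset.sum_mul _ _ _).symm
      _ = ∑ z, ∑ w, lam3 z w * d z w := by
          refine Finset.sum_congr rfl fun z _ => ?_
          rw [hr2]
          by_cases hz : Pm z = 0
          · simp [hz, fun w => k3 z hz w]
          · rw [mul_comm]; exact aux_div _ _ fun h => absurd h hz
  rw [e1, e2, e3]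

/-- Quadrilateral inequality for `W1` via gluing. -/
private lemma W1_quad [Fintype S] (Pi Pm Q Ql : S → ℝ) (d : S → S → ℝ)
    (hPi : IsProbDist Pi) (hPm : IsProbDist Pm) (hQ : IsProbDist Q) (hQl : IsProbDist Ql)
    (hd : ∀ i j, 0 ≤ d i j)
    (hquad : ∀ x y z w, d x w ≤ d x y + d z y + d z w) :
    W1 Pi Ql d ≤ W1 Pi Q d + W1 Pm Q d + W1 Pm Ql d := by
  refine le_of_forall_pos_le_add fun ε hε => ?_
  have hε3 : 0 < ε / 3 := by linarith
  obtain ⟨c1, hc1mem, hc1⟩ := Real.lt_sInf_add_pos (W1_set_nonempty Pi Q hPi hQ d) hε3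
  obtain ⟨c2, hc2mem, hc2⟩ := Real.lt_sInf_add_pos (W1_set_nonempty Pm Q hPm hQ d) hε3
  obtain ⟨c3, hc3mem, hc3⟩ := Real.lt_sInf_add_pos (W1_set_nonempty Pm Ql hPm hQl d) hε3
  obtain ⟨lam1, hlam1, rfl⟩ := hc1mem
  obtain ⟨lam2, hlam2, rfl⟩ := hc2mem
  obtain ⟨lam3, hlam3, rfl⟩ := hc3mem
  have hlam2' : ∀ z y, lam2 z y * d z y = lam2 z y * d z y := fun _ _ => rfl
  have key := glue Pi Pm Q Ql lam1 lam2 lam3 d hlam1 hlam2 hlam3 hd hquad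
  have : W1 Pi Q d = sInf {c : ℝ | ∃ lam, IsCoupling Pi Q lam ∧
      c = ∑ i, ∑ j, lam i j * d i j} := rfl
  unfold W1 at *
  linarith

private lemma bdd_range [Fintype A] (f : A → ℝ) : BddAbove (Set.range f) :=
  (Set.finite_range f).bddAbove

theorem DTBSM_quadrilateral_inequality [Fintype S] [Fintype A] [Nonempty A]
    (P P' : S → A → S → ℝ) (R R' : S → A → ℝ) (γ : ℝ)
    (hγ : γ ∈ Set.Ioo (0:ℝ) 1)
    (hP : ∀ s a, IsProbDist (P s a)) (hP' : ∀ s a, IsProbDist (P' s a))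
    (d : ℕ → S → S → ℝ)
    (hd0 : d 0 = fun _ _ => 0)
    (hdrec : ∀ n, d (n+1) = Fop P P' R R' γ (d n)) :
    ∀ (n : ℕ) (i k : S) (j l : S),
      d n i l ≤ d n i j + d n k j + d n k l := by
  have hγ0 : (0:ℝ) ≤ γ := le_of_lt hγ.1
  -- nonnegativity of the approximants
  have hnn : ∀ n i j, 0 ≤ d n i j := by
    intro n
    induction n with
    | zero => intro i j; simp [hd0]
    | succ n ih =>
      intro i j
      rw [hdrec n]
      obtain ⟨a⟩ := (inferInstance : Nonempty A)
      refine le_trans ?_ (le_ciSup (bdd_range _) a)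
      have hw : 0 ≤ W1 (P i a) (P' j a) (d n) :=
        W1_nonneg _ _ _ (hP i a) (hP' j a) (fun x y => ih x y)
      positivity
  intro n
  induction n with
  | zero => intro i k j l; simp [hd0]
  | succ n ih =>
    intro i k j l
    rw [hdrec n]
    refine ciSup_le fun a => ?_
    have hquad : ∀ x y z w, d n x w ≤ d n x y + d n z y + d n z w :=
      fun x y z w => ih x z y w
    have hW : W1 (P i a) (P' l a) (d n)
        ≤ W1 (P i a) (P' j a) (d n) + W1 (P k a) (P' j a) (d n) + W1 (P k a) (P' l a) (d n) :=
      W1_quad _ _ _ _ _ (hP i a) (hP k a) (hP' j a) (hP' l a) (fun x y => hnn n x y) hquad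
    have hR : |R i a - R' l a| ≤ |R i a - R' j a| + |R k a - R' j a| + |R k a - R' l a| := by
      have : R i a - R' l a = (R i a - R' j a) - (R k a - R' j a) + (R k a - R' l a) := by ring
      rw [this]
      calc |(R i a - R' j a) - (R k a - R' j a) + (R k a - R' l a)|
          ≤ |(R i a - R' j a) - (R k a - R' j a)| + |R k a - R' l a| := abs_add_le _ _
        _ ≤ |R i a - R' j a| + |R k a - R' j a| + |R k a - R' l a| := by
            have := abs_sub (R i a - R' j a) (R k a - R' j a)
            linarith
    have h1 : |R i a - R' j a| + γ * W1 (P i a) (P' j a) (d n)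
        ≤ Fop P P' R R' γ (d n) i j := by
      unfold Fop
      exact le_ciSup (f := fun a => |R i a - R' j a| + γ * W1 (P i a) (P' j a) (d n))
        (bdd_range _) a
    have h2 : |R k a - R' j a| + γ * W1 (P k a) (P' j a) (d n)
        ≤ Fop P P' R R' γ (d n) k j := by
      unfold Fop
      exact le_ciSup (f := fun a => |R k a - R' j a| + γ * W1 (P k a) (P' j a) (d n))
        (bdd_range _) a
    have h3 : |R k a - R' l a| + γ * W1 (P k a) (P' l a) (d n)
        ≤ Fop P P' R R' γ (d n) k l := by
      unfold Fop
      exact le_ciSup (f := fun a => |R k a - R' l a| + γ * W1 (P k a) (P' l a) (d n))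
        (bdd_range _) a
    have hmul : γ * W1 (P i a) (P' l a) (d n)
        ≤ γ * (W1 (P i a) (P' j a) (d n) + W1 (P k a) (P' j a) (d n)
          + W1 (P k a) (P' l a) (d n)) := mul_le_mul_of_nonneg_left hW hγ0
    rw [mul_add, mul_add] at hmul
    linarith [hmul, hR, h1, h2, h3]
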